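/- Let Y₂,…,Y_{m−1} be independent exponential random variables with Y_i ~ Exp(i) (i = 2,…,m−1) and define φ_m(t) = k for Σ_{i=2}^k Y_i ≤ t < Σ_{i=2}^{k+1} Y_i (k = 1,…,m−1, with Y_m := +∞ and empty sums equal to 0). Then E[∫₀^∞ e^{−t} φ_m(t) dt] = 2(H_m − 1), where H_m is the m-th harmonic number. -/

import Mathlib

open MeasureTheory ProbabilityTheory Real Finset
open scoped ENNReal

/-- The characteristic `φ_m(t)`: number of keys in a vertex of the `m`-ary search tree
at age `t`, namely `k` on `[Σ_{i=2}^k Y_i, Σ_{i=2}^{k+1} Y_i)`; equivalently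
`1 + #{k ∈ [2, m-1] : Σ_{i=2}^k Y_i ≤ t}`. -/
noncomputable def phiM (m : ℕ) (Y : ℕ → ℝ) (t : ℝ) : ℝ :=
  1 + ∑ k ∈ Finset.Icc 2 (m - 1),
    (if (∑ i ∈ Finset.Icc 2 k, Y i) ≤ t then (1 : ℝ) else 0)

open scoped NNReal

/-- Lemma A: basic exponential set integral. -/
lemma aux_integral_exp_ind {s : ℝ} (hs : 0 ≤ s) :
    ∫ t in Set.Ioi (0:ℝ), Real.exp (-t) * (if s ≤ t then (1:ℝ) else 0) = Real.exp (-s) := by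
  have h1 : ∀ t : ℝ, Real.exp (-t) * (if s ≤ t then (1:ℝ) else 0)
      = Set.indicator (Set.Ici s) (fun t => Real.exp (-t)) t := by
    intro t
    simp only [Set.indicator_apply, Set.mem_Ici]
    split <;> simp
  simp_rw [h1]
  rw [setIntegral_indicator measurableSet_Ici]
  rw [setIntegral_congr_set (μ := volume)
    (show (Set.Ioi 0 ∩ Set.Ici s : Set ℝ) =ᵐ[volume] Set.Ioi s from ?_)]
  · exact integral_exp_neg_Ioi s
  · rw [MeasureTheory.ae_eq_set]
    constructor
    · refine measure_mono_null (fun t ht => ?_) (volume_singleton (a := s))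
      simp only [Set.mem_diff, Set.mem_inter_iff, Set.mem_Ioi, Set.mem_Ici] at ht ⊢
      simp only [Set.mem_singleton_iff]
      linarith [lt_or_eq_of_le ht.1.2]
    · refine measure_mono_null (fun t ht => ?_) (measure_empty (μ := volume))
      simp only [Set.mem_diff, Set.mem_inter_iff, Set.mem_Ioi, Set.mem_Ici] at ht
      exact absurd ⟨lt_of_le_of_lt hs ht.1, ht.1.le⟩ ht.2

/-- Lemma B: Laplace transform of the exponential distribution at 1. -/
lemma aux_integral_expMeasure {r : ℝ} (hr : 0 < r) :
    ∫ x, Real.exp (-x) ∂(expMeasure r) = r / (r + 1) := by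
  have hpdf : exponentialPDF r = fun x => ((exponentialPDFReal r x).toNNReal : ℝ≥0∞) := by
    funext x; rw [exponentialPDF, ENNReal.ofReal]
  rw [show expMeasure r = volume.withDensity (exponentialPDF r) from rfl, hpdf,
    integral_withDensity_eq_integral_smul ((measurable_exponentialPDFReal r).real_toNNReal)]
  have h2 : ∀ x : ℝ, (exponentialPDFReal r x).toNNReal • Real.exp (-x)
      = Set.indicator (Set.Ici 0) (fun x => r * Real.exp (-((r+1) * x))) x := by
    intro x
    rw [NNReal.smul_def, Real.coe_toNNReal _ (exponentialPDFReal_nonneg hr x)]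
    rw [exponentialPDFReal, gammaPDFReal]
    simp only [Set.indicator_apply, Set.mem_Ici, rpow_one, Real.Gamma_one, div_one, sub_self,
      rpow_zero, mul_one]
    split
    · rw [smul_eq_mul, mul_assoc, ← Real.exp_add]; ring_nf
    · simp
  simp_rw [h2]
  rw [integral_indicator measurableSet_Ici, integral_Ici_eq_integral_Ioi,
    integral_const_mul]
  have h3 := integral_comp_mul_left_Ioi (fun x => Real.exp (-x)) 0
    (show (0:ℝ) < r + 1 by linarith)
  simp only [mul_zero] at h3
  rw [h3, integral_exp_neg_Ioi, smul_eq_mul]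
  rw [neg_zero, Real.exp_zero]; field_simp

/-- Lemma C: telescoping product. -/
lemma aux_prod (k : ℕ) (hk : 2 ≤ k) :
    ∏ i ∈ Finset.Icc 2 k, ((i : ℝ) / (i + 1)) = 2 / ((k : ℝ) + 1) := by
  induction k with
  | zero => omega
  | succ n ih =>
    rcases Nat.lt_or_ge n 2 with h | h
    · have hn : n = 1 := by omega
      subst hn
      norm_num [show Finset.Icc 2 2 = {2} from rfl]
    · rw [Finset.prod_Icc_succ_top (by omega : 2 ≤ n + 1), ih h]
      have h1 : (n : ℝ) + 1 ≠ 0 := by positivity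
      have h2 : (n : ℝ) + 1 + 1 ≠ 0 := by positivity
      push_cast
      field_simp

/-- Lemma D: the harmonic sum identity. -/
lemma aux_sum (m : ℕ) (hm : 2 ≤ m) :
    1 + ∑ k ∈ Finset.Icc 2 (m - 1), (2 / ((k : ℝ) + 1))
      = 2 * ((∑ i ∈ Finset.Icc 1 m, (1 : ℝ) / i) - 1) := by
  induction m with
  | zero => omega
  | succ n ih =>
    rcases Nat.lt_or_ge n 2 with h | h
    · have hn : n = 1 := by omega
      subst hn
      rw [show Finset.Icc 2 (1 + 1 - 1) = ∅ from rfl,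
        show Finset.Icc 1 (1 + 1) = {1, 2} from rfl]
      norm_num
    · have hn1 : n + 1 - 1 = (n - 1) + 1 := by omega
      rw [hn1, Finset.sum_Icc_succ_top (by omega : 2 ≤ (n - 1) + 1),
        Finset.sum_Icc_succ_top (by omega : 1 ≤ n + 1),
        show n - 1 + 1 = n from by omega]
      have := ih h
      have h2 : 2 / ((n:ℝ) + 1) = 2 * (1 / ((n:ℝ) + 1)) := by ring
      push_cast
      linarith [this, h2]

theorem stmt6 {Ω : Type*} [MeasureSpace Ω] [IsProbabilityMeasure (ℙ : Measure Ω)]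
    (m : ℕ) (hm : 2 ≤ m)
    (Y : ℕ → Ω → ℝ)
    (hmeasY : ∀ i, Measurable (Y i))
    (hY : ∀ i ∈ Finset.Icc 2 (m - 1), Measure.map (Y i) ℙ = expMeasure i)
    (hindep : iIndepFun Y ℙ) :
    ∫ ω, (∫ t in Set.Ioi (0:ℝ), Real.exp (-t) * phiM m (fun i => Y i ω) t) ∂ℙ
      = 2 * ((∑ i ∈ Finset.Icc 1 m, (1 : ℝ) / i) - 1) := by
  -- a.e. nonnegativity
  have hae : ∀ᵐ ω ∂ℙ, ∀ i ∈ Finset.Icc 2 (m - 1), 0 ≤ Y i ω := by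
    rw [MeasureTheory.ae_all_iff]
    intro i
    by_cases hi : i ∈ Finset.Icc 2 (m - 1)
    swap
    · exact Filter.Eventually.of_forall fun ω h => absurd h hi
    refine Filter.Eventually.mono ?_ (fun ω h _ => h)
    rw [ae_iff]
    have h0 : {ω | ¬ 0 ≤ Y i ω} = Y i ⁻¹' (Set.Iio 0) := by
      ext ω; simp [not_le]
    rw [h0, ← Measure.map_apply (hmeasY i) measurableSet_Iio, hY i hi]
    rw [show expMeasure (i:ℝ) = volume.withDensity (exponentialPDF i) from rfl,
      withDensity_apply _ measurableSet_Iio]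
    exact lintegral_exponentialPDF_of_nonpos le_rfl
  -- measurability & integrability of exp(-S_k)
  have hmeasS : ∀ k : ℕ, Measurable fun ω => Real.exp (-(∑ i ∈ Finset.Icc 2 k, Y i ω)) := by
    intro k
    exact (Finset.measurable_sum _ (fun i _ => hmeasY i)).neg.exp
  have hintS : ∀ k ∈ Finset.Icc 2 (m-1),
      Integrable (fun ω => Real.exp (-(∑ i ∈ Finset.Icc 2 k, Y i ω))) ℙ := by
    intro k hk
    refine Integrable.mono' (integrable_const 1) (hmeasS k).aestronglyMeasurable ?_
    filter_upwards [hae] with ω hω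
    rw [Real.norm_eq_abs, abs_of_pos (Real.exp_pos _)]
    rw [Real.exp_le_one_iff, neg_nonpos]
    refine Finset.sum_nonneg fun i hi => hω i ?_
    simp only [Finset.mem_Icc] at hi hk ⊢
    omega
  -- compute the inner integral a.e.
  have key : ∀ᵐ ω ∂ℙ, (∫ t in Set.Ioi (0:ℝ), Real.exp (-t) * phiM m (fun i => Y i ω) t)
      = 1 + ∑ k ∈ Finset.Icc 2 (m-1), Real.exp (-(∑ i ∈ Finset.Icc 2 k, Y i ω)) := by
    filter_upwards [hae] with ω hω
    have hS : ∀ k ∈ Finset.Icc 2 (m-1), 0 ≤ ∑ i ∈ Finset.Icc 2 k, Y i ω := by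
      intro k hk
      refine Finset.sum_nonneg fun i hi => hω i ?_
      simp only [Finset.mem_Icc] at hi hk ⊢; omega
    have hexp : IntegrableOn (fun t : ℝ => Real.exp (-t)) (Set.Ioi 0) := by
      have := exp_neg_integrableOn_Ioi 0 (one_pos (α := ℝ))
      simpa using this
    have hterm : ∀ k ∈ Finset.Icc 2 (m-1),
        IntegrableOn (fun t : ℝ => Real.exp (-t) *
          (if (∑ i ∈ Finset.Icc 2 k, Y i ω) ≤ t then (1:ℝ) else 0)) (Set.Ioi 0) := by
      intro k hk
      refine Integrable.mono' hexp ?_ ?_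
      · refine Measurable.aestronglyMeasurable ?_
        exact (measurable_neg.exp).mul
          (Measurable.ite (measurableSet_le measurable_const measurable_id)
            measurable_const measurable_const)
      · refine Filter.Eventually.of_forall fun t => ?_
        rw [Real.norm_eq_abs, abs_mul, abs_of_pos (Real.exp_pos _)]
        have : |(if (∑ i ∈ Finset.Icc 2 k, Y i ω) ≤ t then (1:ℝ) else 0)| ≤ 1 := by
          split <;> simp
        calc Real.exp (-t) * |(if (∑ i ∈ Finset.Icc 2 k, Y i ω) ≤ t then (1:ℝ) else 0)|
            ≤ Real.exp (-t) * 1 := by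
              exact mul_le_mul_of_nonneg_left this (Real.exp_pos _).le
          _ = Real.exp (-t) := mul_one _
    unfold phiM
    have hsplit : ∀ t : ℝ, Real.exp (-t) * (1 + ∑ k ∈ Finset.Icc 2 (m-1),
        (if (∑ i ∈ Finset.Icc 2 k, Y i ω) ≤ t then (1:ℝ) else 0))
        = Real.exp (-t) + ∑ k ∈ Finset.Icc 2 (m-1),
          Real.exp (-t) * (if (∑ i ∈ Finset.Icc 2 k, Y i ω) ≤ t then (1:ℝ) else 0) := by
      intro t; rw [mul_add, mul_one, Finset.mul_sum]
    simp_rw [hsplit]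
    rw [integral_add hexp (integrable_finset_sum _ hterm),
      integral_finset_sum _ hterm, integral_exp_neg_Ioi_zero]
    congr 1
    refine Finset.sum_congr rfl fun k hk => ?_
    exact aux_integral_exp_ind (hS k hk)
  rw [integral_congr_ae key]
  rw [integral_add (integrable_const 1) (integrable_finset_sum _ hintS),
    integral_finset_sum _ hintS]
  simp only [integral_const, measure_univ, probReal_univ, ENNReal.toReal_one, smul_eq_mul, mul_one, one_mul]
  have hval : ∀ k ∈ Finset.Icc 2 (m-1),
      ∫ ω, Real.exp (-(∑ i ∈ Finset.Icc 2 k, Y i ω)) ∂ℙ = 2 / ((k : ℝ) + 1) := by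
    intro k hk
    simp only [Finset.mem_Icc] at hk
    have hmgf : (∫ ω, Real.exp (-(∑ i ∈ Finset.Icc 2 k, Y i ω)) ∂ℙ)
        = mgf (∑ i ∈ Finset.Icc 2 k, Y i) ℙ (-1) := by
      unfold mgf
      refine integral_congr_ae (Filter.Eventually.of_forall fun ω => ?_)
      simp [Finset.sum_apply, neg_one_mul]
    rw [hmgf, hindep.mgf_sum hmeasY]
    have hone : ∀ i ∈ Finset.Icc 2 k, mgf (Y i) ℙ (-1) = (i : ℝ) / ((i : ℝ) + 1) := by
      intro i hi
      simp only [Finset.mem_Icc] at hi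
      have hi' : i ∈ Finset.Icc 2 (m-1) := by simp only [Finset.mem_Icc]; omega
      unfold mgf
      simp_rw [neg_one_mul]
      have : (∫ ω, Real.exp (-Y i ω) ∂ℙ) = ∫ x, Real.exp (-x) ∂(Measure.map (Y i) ℙ) :=
        (integral_map (hmeasY i).aemeasurable
          (Measurable.aestronglyMeasurable (measurable_id.neg.exp))).symm
      rw [this, hY i hi']
      exact aux_integral_expMeasure (by exact_mod_cast (show 0 < i by omega))
    rw [Finset.prod_congr rfl hone]
    exact aux_prod k hk.1
  rw [Finset.sum_congr rfl hval]
  exact aux_sum m hm
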